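/- Let q > 3 be a prime and p a prime with q | p - 1. The number of isomorphism classes of groups of the form (C_p × C_p) ⋊ C_q where a generator of C_q acts as a diagonal non-scalar matrix diag(ζ, ζ^s) with ζ of order q, s ∉ {0, 1, -1} mod q, and determinant ζ^{1+s} ≠ 1, is (q - 3)/2. -/

import Mathlib

open Multiplicative SemidirectProduct

lemma key_field {F : Type*} [Field F] {a b c d α β γ δ : F} (hαβ : α ≠ β)
    (hinj : ∀ x y : F, a*x + b*y = 0 → c*x + d*y = 0 → x = 0 ∧ y = 0)
    (h1 : α * a = γ * a) (h2 : β * b = γ * b) (h3 : α * c = δ * c) (h4 : β * d = δ * d) :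
    (γ = α ∧ δ = β) ∨ (γ = β ∧ δ = α) := by
  have hker : ¬ (a = 0 ∧ c = 0) := fun ⟨ha, hc⟩ =>
    one_ne_zero ((hinj 1 0 (by simp [ha]) (by simp [hc])).1)
  have hker2 : ¬ (b = 0 ∧ d = 0) := fun ⟨hb, hd⟩ =>
    one_ne_zero ((hinj 0 1 (by simp [hb]) (by simp [hd])).2)
  have e1 : γ = α ∨ a = 0 := by
    rcases mul_eq_zero.1 (show (γ - α) * a = 0 by linear_combination -h1) with h | h
    · exact Or.inl (sub_eq_zero.1 h)
    · exact Or.inr h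
  have e2 : γ = β ∨ b = 0 := by
    rcases mul_eq_zero.1 (show (γ - β) * b = 0 by linear_combination -h2) with h | h
    · exact Or.inl (sub_eq_zero.1 h)
    · exact Or.inr h
  have e3 : δ = α ∨ c = 0 := by
    rcases mul_eq_zero.1 (show (δ - α) * c = 0 by linear_combination -h3) with h | h
    · exact Or.inl (sub_eq_zero.1 h)
    · exact Or.inr h
  have e4 : δ = β ∨ d = 0 := by
    rcases mul_eq_zero.1 (show (δ - β) * d = 0 by linear_combination -h4) with h | h
    · exact Or.inl (sub_eq_zero.1 h)
    · exact Or.inr h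
  rcases e1 with hγα | ha <;> rcases e4 with hδβ | hd
  · exact Or.inl ⟨hγα, hδβ⟩
  · -- γ = α, d = 0. Then from hker2, b ≠ 0, so γ = β: contradiction with γ = α, α ≠ β
    rcases e2 with hγβ | hb
    · exact absurd (hγα.symm.trans hγβ) hαβ
    · exact absurd ⟨hb, hd⟩ hker2
  · -- a = 0, δ = β. Then from hker, c ≠ 0 so δ = α
    rcases e3 with hδα | hc
    · exact absurd (hδα.symm.trans hδβ) hαβ
    · exact absurd ⟨ha, hc⟩ hker
  · -- a = 0, d = 0
    rcases e2 with hγβ | hb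
    · rcases e3 with hδα | hc
      · exact Or.inr ⟨hγβ, hδα⟩
      · exact absurd ⟨ha, hc⟩ hker
    · -- a = 0, b = 0 : then hinj d (-c) kills
      obtain ⟨-, hc⟩ := hinj d (-c) (by rw [ha, hb]; ring) (by ring)
      exact absurd ⟨ha, neg_eq_zero.1 hc⟩ hker


section Type8Aux

variable {p q : ℕ} (hq : q.Prime)
  (ζ : (ZMod p)ˣ) (hζ : orderOf ζ = q)
  (φ : ZMod q → (Multiplicative (ZMod q) →* MulAut (Multiplicative (ZMod p × ZMod p))))
  (hact : ∀ (s : ZMod q) (v : ZMod p × ZMod p),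
      φ s (ofAdd (1 : ZMod q)) (ofAdd v) =
        ofAdd ((ζ : ZMod p) * v.1, ((ζ ^ s.val : (ZMod p)ˣ) : ZMod p) * v.2))

include hq hζ in
lemma zpow_natCast_val (n : ℕ) : ζ ^ ((n : ZMod q)).val = ζ ^ n := by
  haveI : NeZero q := ⟨hq.ne_zero⟩
  rw [pow_eq_pow_iff_modEq, hζ, ZMod.val_natCast]
  exact Nat.mod_modEq n q

include hact in
lemma phi_pow_apply (s : ZMod q) (n : ℕ) (v : ZMod p × ZMod p) :
    ((φ s (ofAdd (1 : ZMod q))) ^ n) (ofAdd v) =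
      ofAdd (((ζ ^ n : (ZMod p)ˣ) : ZMod p) * v.1,
        (((ζ ^ s.val) ^ n : (ZMod p)ˣ) : ZMod p) * v.2) := by
  induction n generalizing v with
  | zero => simp
  | succ n ih =>
    rw [pow_succ, MulAut.mul_apply, hact, ih]
    congr 1
    simp only [Prod.mk.injEq]
    constructor <;> · push_cast; ring

include hq hζ hact in
lemma phi_apply (s k : ZMod q) (v : ZMod p × ZMod p) :
    φ s (ofAdd k) (ofAdd v) =
      ofAdd (((ζ ^ k.val : (ZMod p)ˣ) : ZMod p) * v.1,
        ((ζ ^ (s * k).val : (ZMod p)ˣ) : ZMod p) * v.2) := by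
  haveI : NeZero q := ⟨hq.ne_zero⟩
  have hk : ofAdd k = (ofAdd (1 : ZMod q)) ^ k.val := by
    rw [← ofAdd_nsmul]
    norm_num [ZMod.natCast_val, ZMod.cast_id]
  rw [hk, map_pow, phi_pow_apply ζ φ hact]
  congr 2
  rw [← pow_mul, ← zpow_natCast_val hq ζ hζ (s.val * k.val)]
  congr 1
  push_cast [ZMod.natCast_val, ZMod.cast_id]
  ring


include hq in
lemma pow_p_right (hp : p.Prime) (hdvd : q ∣ p - 1) (s : ZMod q)
    (g : Multiplicative (ZMod p × ZMod p) ⋊[φ s] Multiplicative (ZMod q)) :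
    g ^ p = 1 ↔ g.right = 1 := by
  haveI : NeZero q := ⟨hq.ne_zero⟩
  have hp1 : (p : ZMod q) = 1 := by
    have h0 : ((p - 1 : ℕ) : ZMod q) = 0 := (ZMod.natCast_eq_zero_iff _ _).2 hdvd
    have h1 : p - 1 + 1 = p := Nat.succ_pred_eq_of_pos hp.pos
    calc (p : ZMod q) = ((p - 1 + 1 : ℕ) : ZMod q) := by rw [h1]
      _ = 1 := by push_cast [h0]; ring
  constructor
  · intro h
    have hr : g.right ^ p = 1 := by
      have := congrArg SemidirectProduct.rightHom h
      rwa [map_pow, map_one] at this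
    have hfix : g.right ^ p = g.right := by
      conv_lhs => rw [← ofAdd_toAdd g.right, ← ofAdd_nsmul]
      rw [nsmul_eq_mul, hp1, one_mul, ofAdd_toAdd]
    rw [hfix] at hr
    exact hr
  · intro h
    have hg : g = SemidirectProduct.inl g.left := by
      ext : 1
      · simp
      · simp [h]
    have hl : g.left ^ p = 1 := by
      conv_lhs => rw [← ofAdd_toAdd g.left, ← ofAdd_nsmul]
      have : p • (toAdd g.left) = 0 := by
        ext
        · show p • (toAdd g.left).1 = 0
          rw [nsmul_eq_mul, ZMod.natCast_self, zero_mul]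
        · show p • (toAdd g.left).2 = 0
          rw [nsmul_eq_mul, ZMod.natCast_self, zero_mul]
      rw [this, ofAdd_zero]
    rw [hg, ← map_pow, hl, map_one]


include hq hζ hact in
lemma fwd_nonempty (s : ZMod q) (hs0 : s ≠ 0) :
    Nonempty ((Multiplicative (ZMod p × ZMod p) ⋊[φ s] Multiplicative (ZMod q)) ≃*
      (Multiplicative (ZMod p × ZMod p) ⋊[φ s⁻¹] Multiplicative (ZMod q))) := by
  haveI : Fact q.Prime := ⟨hq⟩
  refine ⟨{ toFun := fun g => ⟨ofAdd (toAdd g.left).swap, ofAdd (s * toAdd g.right)⟩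
            invFun := fun g => ⟨ofAdd (toAdd g.left).swap, ofAdd (s⁻¹ * toAdd g.right)⟩
            left_inv := fun g => ?_
            right_inv := fun g => ?_
            map_mul' := fun a b => ?_ }⟩
  · ext : 1
    · simp
    · simp [inv_mul_cancel_left₀ hs0]
  · ext : 1
    · simp
    · simp [mul_inv_cancel_left₀ hs0]
  · ext : 1
    · show ofAdd (toAdd ((a * b).left)).swap =
        (ofAdd (toAdd a.left).swap) * (φ s⁻¹) (ofAdd (s * toAdd a.right)) (ofAdd (toAdd b.left).swap)
      rw [SemidirectProduct.mul_left]
      conv_lhs => rw [← ofAdd_toAdd a.right, ← ofAdd_toAdd b.left]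
      rw [phi_apply hq ζ hζ φ hact, phi_apply hq ζ hζ φ hact]
      rw [inv_mul_cancel_left₀ hs0]
      congr 1
    · show ofAdd (s * toAdd ((a * b).right)) =
        ofAdd (s * toAdd a.right) * ofAdd (s * toAdd b.right)
      rw [SemidirectProduct.mul_right, ← ofAdd_add, toAdd_mul, mul_add]


lemma conj_inl {u : ZMod q} (g : Multiplicative (ZMod p × ZMod p) ⋊[φ u] Multiplicative (ZMod q))
    (x : Multiplicative (ZMod p × ZMod p)) :
    g * SemidirectProduct.inl x * g⁻¹ = SemidirectProduct.inl ((φ u) g.right x) := by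
  ext : 1
  · simp only [SemidirectProduct.mul_left, SemidirectProduct.mul_right,
      SemidirectProduct.inv_left, SemidirectProduct.inv_right, SemidirectProduct.left_inl,
      SemidirectProduct.right_inl, mul_one, map_inv]
    rw [MulAut.apply_inv_self, mul_comm g.left, mul_inv_cancel_right]
  · simp

include hq hζ in
lemma zeta_pow_inj (j k : ZMod q) (h : ζ ^ j.val = ζ ^ k.val) : j = k := by
  haveI : NeZero q := ⟨hq.ne_zero⟩
  rw [pow_eq_pow_iff_modEq, hζ, Nat.ModEq,
    Nat.mod_eq_of_lt (ZMod.val_lt j), Nat.mod_eq_of_lt (ZMod.val_lt k)] at h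
  calc j = ((j.val : ℕ) : ZMod q) := by simp [ZMod.natCast_val, ZMod.cast_id]
    _ = ((k.val : ℕ) : ZMod q) := by rw [h]
    _ = k := by simp [ZMod.natCast_val, ZMod.cast_id]

include hq hζ hact in
lemma iso_imp (hp : p.Prime) (hdvd : q ∣ p - 1) (s t : ZMod q) (hs1 : s ≠ 1)
    (e : (Multiplicative (ZMod p × ZMod p) ⋊[φ s] Multiplicative (ZMod q)) ≃*
         (Multiplicative (ZMod p × ZMod p) ⋊[φ t] Multiplicative (ZMod q))) :
    t = s ∨ t = s⁻¹ := by
  haveI : Fact p.Prime := ⟨hp⟩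
  haveI : Fact q.Prime := ⟨hq⟩
  haveI : NeZero q := ⟨hq.ne_zero⟩
  have hN : ∀ v : ZMod p × ZMod p,
      (e (SemidirectProduct.inl (ofAdd v))).right = 1 := by
    intro v
    rw [← pow_p_right hq φ hp hdvd t, ← map_pow]
    have h1 : (SemidirectProduct.inl (ofAdd v) :
        Multiplicative (ZMod p × ZMod p) ⋊[φ s] Multiplicative (ZMod q)) ^ p = 1 :=
      (pow_p_right hq φ hp hdvd s _).2 (by simp)
    rw [h1, map_one]
  set L : ZMod p × ZMod p → ZMod p × ZMod p :=
    fun v => toAdd ((e (SemidirectProduct.inl (ofAdd v))).left) with hL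
  have hEL : ∀ v, e (SemidirectProduct.inl (ofAdd v)) =
      SemidirectProduct.inl (ofAdd (L v)) := by
    intro v
    ext : 1
    · simp [hL]
    · simp [hN v]
  have hLadd : ∀ v w, L (v + w) = L v + L w := by
    intro v w
    have h2 : e (SemidirectProduct.inl (ofAdd (v + w))) =
        e (SemidirectProduct.inl (ofAdd v)) * e (SemidirectProduct.inl (ofAdd w)) := by
      rw [← map_mul, ← map_mul, ← ofAdd_add]
    rw [hEL, hEL, hEL, ← map_mul, ← ofAdd_add] at h2
    have := SemidirectProduct.inl_injective h2
    exact ofAdd.injective this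
  have hLinj : ∀ v, L v = 0 → v = 0 := by
    intro v hv
    have h3 : e (SemidirectProduct.inl (ofAdd v)) = e 1 := by
      rw [hEL, hv, map_one, ofAdd_zero, map_one]
    have := e.injective h3
    have h4 := SemidirectProduct.inl_injective (by rw [this]; ext <;> simp :
      (SemidirectProduct.inl (ofAdd v) :
        Multiplicative (ZMod p × ZMod p) ⋊[φ s] Multiplicative (ZMod q)) =
      SemidirectProduct.inl (ofAdd (0 : ZMod p × ZMod p)))
    exact ofAdd.injective h4
  -- L as an AddMonoidHom for nsmul
  set Lh : (ZMod p × ZMod p) →+ (ZMod p × ZMod p) := AddMonoidHom.mk' L hLadd with hLh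
  set w1 := L (1, 0) with hw1
  set w2 := L (0, 1) with hw2
  have Lxy : ∀ x y : ZMod p, L (x, y) = (w1.1 * x + w2.1 * y, w1.2 * x + w2.2 * y) := by
    intro x y
    have hv : (x, y) = x.val • ((1 : ZMod p), (0 : ZMod p)) + y.val • ((0 : ZMod p), (1 : ZMod p)) := by
      ext
      · simp [ZMod.natCast_val, ZMod.cast_id]
      · simp [ZMod.natCast_val, ZMod.cast_id]
    have : Lh (x, y) = x.val • Lh (1, 0) + y.val • Lh (0, 1) := by
      conv_lhs => rw [hv]
      rw [map_add, map_nsmul, map_nsmul]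
    have hLhL : ∀ v, Lh v = L v := fun v => rfl
    rw [hLhL, hLhL, hLhL] at this
    rw [this, ← hw1, ← hw2]
    ext
    · simp [ZMod.natCast_val, ZMod.cast_id, mul_comm]
    · simp [ZMod.natCast_val, ZMod.cast_id, mul_comm]
  set m : ZMod q := toAdd ((e (SemidirectProduct.inr (ofAdd (1 : ZMod q)))).right) with hm
  have hconj : ∀ v : ZMod p × ZMod p,
      L ((ζ : ZMod p) * v.1, ((ζ ^ s.val : (ZMod p)ˣ) : ZMod p) * v.2) =
        (((ζ ^ m.val : (ZMod p)ˣ) : ZMod p) * (L v).1,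
         ((ζ ^ (t * m).val : (ZMod p)ˣ) : ZMod p) * (L v).2) := by
    intro v
    have h0 := SemidirectProduct.inl_aut (φ := φ s) (ofAdd (1 : ZMod q)) (ofAdd v)
    have h1 : e (SemidirectProduct.inl ((φ s) (ofAdd (1 : ZMod q)) (ofAdd v))) =
        e (SemidirectProduct.inr (ofAdd (1 : ZMod q))) * e (SemidirectProduct.inl (ofAdd v)) *
          (e (SemidirectProduct.inr (ofAdd (1 : ZMod q))))⁻¹ := by
      rw [h0, map_mul, map_mul, map_inv, map_inv]
    rw [hact, hEL, hEL, conj_inl φ] at h1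
    have hr : (e (SemidirectProduct.inr (ofAdd (1 : ZMod q)))).right = ofAdd m := by
      rw [hm, ofAdd_toAdd]
    rw [hr, phi_apply hq ζ hζ φ hact] at h1
    exact ofAdd.injective (SemidirectProduct.inl_injective h1)
  haveI : Fact (1 < q) := ⟨hq.one_lt⟩
  have hαβ : (ζ : ZMod p) ≠ ((ζ ^ s.val : (ZMod p)ˣ) : ZMod p) := by
    intro h
    refine hs1 (zeta_pow_inj hq ζ hζ s 1 ?_)
    rw [ZMod.val_one, pow_one]
    exact (Units.ext h).symm
  have e10 := hconj (1, 0)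
  have e01 := hconj (0, 1)
  simp only [mul_one, mul_zero] at e10 e01
  rw [Lxy] at e10 e01
  rw [← hw1] at e10
  rw [← hw2] at e01
  rw [Prod.mk.injEq] at e10 e01
  obtain ⟨e10a, e10b⟩ := e10
  obtain ⟨e01a, e01b⟩ := e01
  have hinj : ∀ x y : ZMod p, w1.1 * x + w2.1 * y = 0 → w1.2 * x + w2.2 * y = 0 →
      x = 0 ∧ y = 0 := by
    intro x y hxy hcd
    have h0 : L (x, y) = 0 := by
      rw [Lxy]
      ext
      · exact hxy
      · exact hcd
    have := hLinj _ h0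
    exact ⟨congrArg Prod.fst this, congrArg Prod.snd this⟩
  have h1 : (ζ : ZMod p) * w1.1 = ((ζ ^ m.val : (ZMod p)ˣ) : ZMod p) * w1.1 := by
    linear_combination e10a
  have h2 : ((ζ ^ s.val : (ZMod p)ˣ) : ZMod p) * w2.1 =
      ((ζ ^ m.val : (ZMod p)ˣ) : ZMod p) * w2.1 := by linear_combination e01a
  have h3 : (ζ : ZMod p) * w1.2 = ((ζ ^ (t * m).val : (ZMod p)ˣ) : ZMod p) * w1.2 := by
    linear_combination e10b
  have h4 : ((ζ ^ s.val : (ZMod p)ˣ) : ZMod p) * w2.2 =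
      ((ζ ^ (t * m).val : (ZMod p)ˣ) : ZMod p) * w2.2 := by linear_combination e01b
  rcases key_field hαβ hinj h1 h2 h3 h4 with ⟨hγ, hδ⟩ | ⟨hγ, hδ⟩
  · left
    have hm1 : m = 1 := by
      refine zeta_pow_inj hq ζ hζ m 1 ?_
      rw [ZMod.val_one, pow_one]
      exact Units.ext hγ
    have htm : t * m = s := zeta_pow_inj hq ζ hζ (t * m) s (Units.ext hδ)
    rw [hm1, mul_one] at htm
    exact htm
  · right
    have hms : m = s := zeta_pow_inj hq ζ hζ m s (Units.ext hγ)
    have htm : t * m = 1 := by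
      refine zeta_pow_inj hq ζ hζ (t * m) 1 ?_
      rw [ZMod.val_one, pow_one]
      exact Units.ext hδ
    rw [hms] at htm
    exact eq_inv_of_mul_eq_one_left htm

end Type8Aux


lemma count_pairing {q : ℕ} (hq : q.Prime) (hq3 : 3 < q) :
    Nat.card (Quot (fun s t : {s : ZMod q // s ≠ 0 ∧ s ≠ 1 ∧ s ≠ -1} =>
      t.1 = s.1 ∨ t.1 = s.1⁻¹)) = (q - 3) / 2 := by
  haveI : Fact q.Prime := ⟨hq⟩
  haveI : NeZero q := ⟨hq.ne_zero⟩
  have h01 : (0 : ZMod q) ≠ 1 := zero_ne_one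
  have h1n : (1 : ZMod q) ≠ -1 := by
    intro h
    have h2 : ((2 : ℕ) : ZMod q) = 0 := by push_cast; linear_combination h
    rw [ZMod.natCast_eq_zero_iff] at h2
    exact absurd (Nat.le_of_dvd two_pos h2) (by omega)
  have h0n : (0 : ZMod q) ≠ -1 := by
    intro h
    have : (1 : ZMod q) = 0 := by linear_combination h
    exact h01 this.symm
  set S := {s : ZMod q // s ≠ 0 ∧ s ≠ 1 ∧ s ≠ -1} with hS
  set r : S → S → Prop := fun s t => t.1 = s.1 ∨ t.1 = s.1⁻¹ with hr
  -- the involution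
  have hmem : ∀ s : S, (s.1⁻¹ ≠ 0 ∧ s.1⁻¹ ≠ 1 ∧ s.1⁻¹ ≠ -1) := by
    rintro ⟨s, hs0, hs1, hsn⟩
    refine ⟨inv_ne_zero hs0, fun h => hs1 ?_, fun h => hsn ?_⟩
    · rw [← inv_inv s, h, inv_one]
    · rw [← inv_inv s, h]; norm_num
  have hneq : ∀ s : S, s.1⁻¹ ≠ s.1 := by
    rintro ⟨s, hs0, hs1, hsn⟩ h
    have : s * s = 1 := by
      nth_rewrite 1 [← inv_inv s, h]
      exact inv_mul_cancel₀ hs0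
    rcases mul_self_eq_one_iff.1 this with h' | h'
    · exact hs1 h'
    · exact hsn h'
  have hrequiv : Equivalence r := by
    constructor
    · intro s; exact Or.inl rfl
    · rintro s t (h | h)
      · exact Or.inl h.symm
      · right; rw [h, inv_inv]
    · rintro s t u (h1 | h1) (h2 | h2)
      · exact Or.inl (h2.trans h1)
      · right; rw [h2, h1]
      · exact Or.inr (h2.trans h1)
      · left; rw [h2, h1, inv_inv]
  letI sr : Setoid S := ⟨r, hrequiv⟩
  have hfin : Fintype S := by infer_instance
  haveI hdec : DecidableRel ((· ≈ ·) : S → S → Prop) := fun s t => by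
    change Decidable (r s t); exact instDecidableOr
  -- identify the Quot with the Quotient
  have hqc : Nat.card (Quot r) = Nat.card (Quotient sr) := rfl
  rw [hqc]
  -- fiber cardinalities
  have hfiber : ∀ c : Quotient sr, Fintype.card {s : S // Quotient.mk sr s = c} = 2 := by
    intro c
    induction c using Quotient.ind with
    | _ s₀ =>
      let is₀ : S := ⟨s₀.1⁻¹, hmem s₀⟩
      have hne : s₀ ≠ is₀ := fun h => hneq s₀ (congrArg Subtype.val h).symm
      have he : {t : S // Quotient.mk sr t = Quotient.mk sr s₀} ≃ ({s₀, is₀} : Finset S) := by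
        apply Equiv.subtypeEquivRight
        intro t
        rw [Quotient.eq]
        show r t s₀ ↔ _
        constructor
        · rintro (h | h)
          · simp only [Finset.mem_insert, Finset.mem_singleton]
            left; exact Subtype.ext h.symm
          · simp only [Finset.mem_insert, Finset.mem_singleton]
            right; apply Subtype.ext
            show t.1 = s₀.1⁻¹
            rw [h, inv_inv]
        · intro h
          simp only [Finset.mem_insert, Finset.mem_singleton] at h
          rcases h with h | h
          · exact Or.inl (congrArg Subtype.val h).symm
          · right
            have ht : t.1 = s₀.1⁻¹ := congrArg Subtype.val h
            rw [ht, inv_inv]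
      rw [Fintype.card_congr he, Fintype.card_coe]
      rw [Finset.card_insert_of_notMem (by simpa using hne), Finset.card_singleton]
  -- total count
  have htot : Fintype.card S = 2 * Fintype.card (Quotient sr) := by
    rw [Fintype.card_congr (Equiv.sigmaFiberEquiv (Quotient.mk sr)).symm,
      Fintype.card_sigma]
    simp only [hfiber]
    rw [Finset.sum_const, smul_eq_mul, Finset.card_univ, mul_comm]
  have hcardS : Fintype.card S = q - 3 := by
    show Fintype.card {s : ZMod q // s ≠ 0 ∧ s ≠ 1 ∧ s ≠ -1} = q - 3
    have he2 : {s : ZMod q // s ≠ 0 ∧ s ≠ 1 ∧ s ≠ -1} ≃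
        ((Finset.univ \ ({0, 1, -1} : Finset (ZMod q)) : Finset (ZMod q)) : Type) := by
      apply Equiv.subtypeEquivRight
      intro s
      simp only [Finset.mem_coe, Finset.mem_sdiff, Finset.mem_univ, true_and,
        Finset.mem_insert, Finset.mem_singleton]
      tauto
    rw [Fintype.card_congr he2, Fintype.card_coe,
      Finset.card_sdiff_of_subset (Finset.subset_univ _), Finset.card_univ, ZMod.card]
    rw [Finset.card_insert_of_notMem (by simp [h01, h0n]),
      Finset.card_insert_of_notMem (by simp [h1n]), Finset.card_singleton]
  rw [Nat.card_eq_fintype_card]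
  omega


theorem count_type8_iso_classes
    {p q : ℕ} (hp : p.Prime) (hq : q.Prime) (hq3 : 3 < q) (hdvd : q ∣ p - 1)
    (ζ : (ZMod p)ˣ) (hζ : orderOf ζ = q)
    (φ : ZMod q → (Multiplicative (ZMod q) →* MulAut (Multiplicative (ZMod p × ZMod p))))
    (hact : ∀ (s : ZMod q) (v : ZMod p × ZMod p),
      φ s (Multiplicative.ofAdd (1 : ZMod q)) (Multiplicative.ofAdd v) =
        Multiplicative.ofAdd ((ζ : ZMod p) * v.1, ((ζ ^ s.val : (ZMod p)ˣ) : ZMod p) * v.2)) :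
    Nat.card (Quot (fun s t : {s : ZMod q // s ≠ 0 ∧ s ≠ 1 ∧ s ≠ -1} =>
      Nonempty ((Multiplicative (ZMod p × ZMod p) ⋊[φ s.1] Multiplicative (ZMod q)) ≃*
        (Multiplicative (ZMod p × ZMod p) ⋊[φ t.1] Multiplicative (ZMod q))))) =
      (q - 3) / 2 := by
  haveI : Fact q.Prime := ⟨hq⟩
  have hiff : ∀ s t : {s : ZMod q // s ≠ 0 ∧ s ≠ 1 ∧ s ≠ -1},
      (Nonempty ((Multiplicative (ZMod p × ZMod p) ⋊[φ s.1] Multiplicative (ZMod q)) ≃*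
        (Multiplicative (ZMod p × ZMod p) ⋊[φ t.1] Multiplicative (ZMod q)))) ↔
      (t.1 = s.1 ∨ t.1 = s.1⁻¹) := by
    intro s t
    constructor
    · rintro ⟨e⟩
      exact iso_imp hq ζ hζ φ hact hp hdvd s.1 t.1 s.2.2.1 e
    · rintro (h | h)
      · obtain ⟨sv, hs⟩ := s
        obtain ⟨tv, ht⟩ := t
        dsimp only at h
        subst h
        exact ⟨MulEquiv.refl _⟩
      · have hne := fwd_nonempty hq ζ hζ φ hact s.1 s.2.1
        rw [← h] at hne
        exact hne
  calc Nat.card (Quot (fun s t : {s : ZMod q // s ≠ 0 ∧ s ≠ 1 ∧ s ≠ -1} =>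
      Nonempty ((Multiplicative (ZMod p × ZMod p) ⋊[φ s.1] Multiplicative (ZMod q)) ≃*
        (Multiplicative (ZMod p × ZMod p) ⋊[φ t.1] Multiplicative (ZMod q)))))
      = Nat.card (Quot (fun s t : {s : ZMod q // s ≠ 0 ∧ s ≠ 1 ∧ s ≠ -1} =>
          t.1 = s.1 ∨ t.1 = s.1⁻¹)) := Nat.card_congr (Quot.congrRight hiff)
    _ = (q - 3) / 2 := count_pairing hq hq3
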